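/- Let A > 0, σ with 0 < σ ≤ A, R > 0, and λ < A². Set q = √(A² − λ) and suppose λ = σ·(A + q·coth(qR)) with q > 0. Then λ ≥ 2σA − σ². -/
import Mathlib


/-- If 0 < σ ≤ A, R > 0, λ < A², q = √(A²−λ) > 0 and λ = σ(A + q coth(qR)),
then λ ≥ 2σA − σ². -/
theorem stmt3 (A σ R lam q : ℝ) (hA : 0 < A) (hσ0 : 0 < σ) (hσA : σ ≤ A)
    (hR : 0 < R) (hlam : lam < A ^ 2) (hq : q = Real.sqrt (A ^ 2 - lam))
    (hqpos : 0 < q)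
    (heq : lam = σ * (A + q * (Real.cosh (q * R) / Real.sinh (q * R)))) :
    2 * σ * A - σ ^ 2 ≤ lam := by
  have hx : 0 < q * R := mul_pos hqpos hR
  have hs : 0 < Real.sinh (q * R) := by positivity
  have hcoth : 1 < Real.cosh (q * R) / Real.sinh (q * R) := by
    rw [lt_div_iff₀ hs, one_mul]
    exact Real.sinh_lt_cosh _
  have h1 : σ * (A + q) ≤ lam := by
    rw [heq]
    have : A + q * 1 ≤ A + q * (Real.cosh (q * R) / Real.sinh (q * R)) := by
      gcongr
    nlinarith
  have hq2 : q ^ 2 = A ^ 2 - lam := by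
    rw [hq, Real.sq_sqrt (by linarith)]
  -- lam - σ*A ≥ σ*q > 0
  have h2 : σ * q ≤ lam - σ * A := by nlinarith
  have hσq : 0 < σ * q := mul_pos hσ0 hqpos
  have h3 : (σ * q) ^ 2 ≤ (lam - σ * A) ^ 2 := by
    apply sq_le_sq' <;> nlinarith
  have hlampos : 0 < lam := by nlinarith
  nlinarith [sq_nonneg (lam - σ * A), mul_pos hσ0 hlampos]
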